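/- Characterization of the extended support for the abstract cone-constrained lasso: Let (a₀,b₀) ∈ C_h^P be a solution of Q_0(A a₀ + B b₀), with I↑ = I↑(a₀,b₀) and I↓ = I↓(a₀,b₀). Let J↑, J↓ ⊆ {0,…,P−1} with I↑ ⊆ J↑ and I↓ ⊆ J↓, assume Ã = ((A+(h/2)B)_{J↑}, (A−(h/2)B)_{J↓}) has full rank, and define (u_{J↑}; v_{J↓}) = −(Ã^*Ã)^{-1}𝟙 and q̃ = Ã(Ã^*Ã)^{-1}𝟙. Then (J↑, J↓) equals the extended support (ext↑, ext↓) of (a₀,b₀) if and only if both: (i) u_j ≥ 0 for all j ∈ J↑∖I↑ and v_j ≥ 0 for all j ∈ J↓∖I↓; and (ii) ((A+(h/2)B)^* q̃)_k < 1 for all k ∉ J↑ and ((A−(h/2)B)^* q̃)_k < 1 for all k ∉ J↓. In that case the minimal-norm dual solution is q₀ = q̃. -/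

import Mathlib

open scoped BigOperators RealInnerProductSpace
noncomputable section

section CbpAux

open ContinuousLinearMap

lemma cbp_inner_clm_euclidean {H : Type*} [NormedAddCommGroup H] [InnerProductSpace ℝ H]
    [CompleteSpace H] {P : ℕ} (M : EuclideanSpace ℝ (Fin P) →L[ℝ] H)
    (x : EuclideanSpace ℝ (Fin P)) (q : H) :
    ⟪M x, q⟫ = ∑ i, x i * (ContinuousLinearMap.adjoint M) q i := by
  rw [← ContinuousLinearMap.adjoint_inner_right]
  simp [PiLp.inner_apply, RCLike.inner_apply]
  exact Finset.sum_congr rfl (fun i _ => mul_comm _ _)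

lemma cbp_affine_feas (c g : ℝ) (hc : c ≤ 1) (h : c < 1 ∨ g ≤ 0) :
    ∃ ε : ℝ, 0 < ε ∧ ∀ t : ℝ, 0 ≤ t → t ≤ ε → c + t * g ≤ 1 := by
  rcases le_or_gt g 0 with hg | hg
  · exact ⟨1, one_pos, fun t ht _ => by nlinarith⟩
  · have hc1 : c < 1 := h.resolve_right (by linarith)
    refine ⟨(1 - c) / g, div_pos (by linarith) hg, fun t ht htε => ?_⟩
    have : t * g ≤ 1 - c := (le_div_iff₀ hg).mp htε
    linarith

lemma cbp_exists_pos_le_forall {ι : Type*} [Fintype ι] (ε : ι → ℝ) (hε : ∀ i, 0 < ε i) :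
    ∃ t : ℝ, 0 < t ∧ ∀ i, t ≤ ε i := by
  classical
  set T : Finset ℝ := insert 1 (Finset.univ.image ε) with hT
  have hne : T.Nonempty := ⟨1, by simp [hT]⟩
  refine ⟨T.min' hne, ?_, fun i => Finset.min'_le _ _ (by simp [hT])⟩
  have := T.min'_mem hne
  simp only [hT, Finset.mem_insert, Finset.mem_image] at this
  rcases this with h1 | ⟨i, _, hi⟩
  · rw [h1]; exact one_pos
  · rw [← hi]; exact hε i

lemma cbp_exists_adjoint_preimage
    {H : Type*} [NormedAddCommGroup H] [InnerProductSpace ℝ H] [CompleteSpace H]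
    {P : ℕ} (M N : EuclideanSpace ℝ (Fin P) →L[ℝ] H)
    (Jup Jdn : Set (Fin P))
    (hfull : ∀ u v : EuclideanSpace ℝ (Fin P),
      (∀ i, i ∉ Jup → u i = 0) → (∀ i, i ∉ Jdn → v i = 0) →
      M u + N v = 0 → u = 0 ∧ v = 0)
    (c d : Fin P → ℝ) :
    ∃ w : H, (∀ j ∈ Jup, (ContinuousLinearMap.adjoint M) w j = c j) ∧
             (∀ j ∈ Jdn, (ContinuousLinearMap.adjoint N) w j = d j) := by
  classical
  let mask : Set (Fin P) → (EuclideanSpace ℝ (Fin P) →ₗ[ℝ] EuclideanSpace ℝ (Fin P)) := fun J =>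
    { toFun := fun x => (WithLp.toLp 2 (fun i => if i ∈ J then x i else 0) : EuclideanSpace ℝ (Fin P))
      map_add' := by
        intro x y; ext i; by_cases hi : i ∈ J <;>
          simp [hi, PiLp.add_apply]
      map_smul' := by
        intro cc x; ext i; by_cases hi : i ∈ J <;>
          simp [hi, PiLp.smul_apply] }
  let E : Submodule ℝ (EuclideanSpace ℝ (Fin P) × EuclideanSpace ℝ (Fin P)) :=
    { carrier := {p | (∀ i, i ∉ Jup → p.1 i = 0) ∧ (∀ i, i ∉ Jdn → p.2 i = 0)}
      add_mem' := by
        rintro a b ⟨ha1, ha2⟩ ⟨hb1, hb2⟩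
        refine ⟨fun i hi => ?_, fun i hi => ?_⟩
        · show a.1 i + b.1 i = 0
          rw [ha1 i hi, hb1 i hi, add_zero]
        · show a.2 i + b.2 i = 0
          rw [ha2 i hi, hb2 i hi, add_zero]
      zero_mem' := ⟨fun i _ => rfl, fun i _ => rfl⟩
      smul_mem' := by
        rintro cc a ⟨ha1, ha2⟩
        refine ⟨fun i hi => ?_, fun i hi => ?_⟩
        · show cc * a.1 i = 0
          rw [ha1 i hi, mul_zero]
        · show cc * a.2 i = 0
          rw [ha2 i hi, mul_zero] }
  have hmemE : ∀ p : EuclideanSpace ℝ (Fin P) × EuclideanSpace ℝ (Fin P),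
      p ∈ E ↔ (∀ i, i ∉ Jup → p.1 i = 0) ∧ (∀ i, i ∉ Jdn → p.2 i = 0) := fun p => Iff.rfl
  let L : (EuclideanSpace ℝ (Fin P) × EuclideanSpace ℝ (Fin P)) →ₗ[ℝ] H :=
    M.toLinearMap.comp (LinearMap.fst ℝ _ _) + N.toLinearMap.comp (LinearMap.snd ℝ _ _)
  let F : (EuclideanSpace ℝ (Fin P) × EuclideanSpace ℝ (Fin P)) →ₗ[ℝ]
      (EuclideanSpace ℝ (Fin P) × EuclideanSpace ℝ (Fin P)) :=
    ((mask Jup).comp ((ContinuousLinearMap.adjoint M).toLinearMap.comp L)).prod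
      ((mask Jdn).comp ((ContinuousLinearMap.adjoint N).toLinearMap.comp L))
  have hF1 : ∀ p i, (F p).1 i = if i ∈ Jup then
      (ContinuousLinearMap.adjoint M) (M p.1 + N p.2) i else 0 := by
    intro p i; rfl
  have hF2 : ∀ p i, (F p).2 i = if i ∈ Jdn then
      (ContinuousLinearMap.adjoint N) (M p.1 + N p.2) i else 0 := by
    intro p i; rfl
  have hFE : ∀ p ∈ E, F p ∈ E := by
    intro p _
    rw [hmemE]
    exact ⟨fun i hi => by rw [hF1, if_neg hi], fun i hi => by rw [hF2, if_neg hi]⟩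
  let Ψ : E →ₗ[ℝ] E := (F.restrict hFE)
  have hinj : Function.Injective Ψ := by
    rw [← LinearMap.ker_eq_bot, LinearMap.ker_eq_bot']
    rintro ⟨⟨u, v⟩, hmem⟩ hzero
    obtain ⟨hu_supp, hv_supp⟩ := (hmemE _).mp hmem
    have hz : F (u, v) = 0 := congrArg Subtype.val hzero
    have hz1 : ∀ i ∈ Jup, (ContinuousLinearMap.adjoint M) (M u + N v) i = 0 := by
      intro i hi
      have h0 := congrArg (fun p : EuclideanSpace ℝ (Fin P) × EuclideanSpace ℝ (Fin P) => p.1 i) hz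
      simpa [hF1 (u, v) i, if_pos hi] using h0
    have hz2 : ∀ i ∈ Jdn, (ContinuousLinearMap.adjoint N) (M u + N v) i = 0 := by
      intro i hi
      have h0 := congrArg (fun p : EuclideanSpace ℝ (Fin P) × EuclideanSpace ℝ (Fin P) => p.2 i) hz
      simpa [hF2 (u, v) i, if_pos hi] using h0
    have hnorm : ⟪M u + N v, M u + N v⟫ = 0 := by
      rw [inner_add_left, cbp_inner_clm_euclidean, cbp_inner_clm_euclidean]
      have s1 : ∑ i, u i * (ContinuousLinearMap.adjoint M) (M u + N v) i = 0 :=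
        Finset.sum_eq_zero (fun i _ => by
          by_cases hi : i ∈ Jup
          · rw [hz1 i hi, mul_zero]
          · rw [show u i = 0 from hu_supp i hi, zero_mul])
      have s2 : ∑ i, v i * (ContinuousLinearMap.adjoint N) (M u + N v) i = 0 :=
        Finset.sum_eq_zero (fun i _ => by
          by_cases hi : i ∈ Jdn
          · rw [hz2 i hi, mul_zero]
          · rw [show v i = 0 from hv_supp i hi, zero_mul])
      rw [s1, s2, add_zero]
    have hMN : M u + N v = 0 := inner_self_eq_zero.mp hnorm
    obtain ⟨hu0, hv0⟩ := hfull u v hu_supp hv_supp hMN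
    apply Subtype.ext
    show (u, v) = 0
    rw [hu0, hv0]; rfl
  have hsurj : Function.Surjective Ψ :=
    (LinearMap.injective_iff_surjective).mp hinj
  let tgt : EuclideanSpace ℝ (Fin P) × EuclideanSpace ℝ (Fin P) :=
    ((WithLp.toLp 2 (fun i => if i ∈ Jup then c i else 0) : EuclideanSpace ℝ (Fin P)),
     (WithLp.toLp 2 (fun i => if i ∈ Jdn then d i else 0) : EuclideanSpace ℝ (Fin P)))
  have htgt : tgt ∈ E := (hmemE tgt).mpr
    ⟨fun i hi => by simp [tgt, if_neg hi], fun i hi => by simp [tgt, if_neg hi]⟩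
  obtain ⟨⟨⟨u, v⟩, hmem⟩, hp⟩ := hsurj ⟨tgt, htgt⟩
  have hpv : F (u, v) = tgt := congrArg Subtype.val hp
  refine ⟨M u + N v, ?_, ?_⟩
  · intro j hj
    have h0 := congrArg (fun p : EuclideanSpace ℝ (Fin P) × EuclideanSpace ℝ (Fin P) => p.1 j) hpv
    simp only [hF1 (u, v) j, if_pos hj] at h0
    simpa [tgt, hj] using h0
  · intro j hj
    have h0 := congrArg (fun p : EuclideanSpace ℝ (Fin P) × EuclideanSpace ℝ (Fin P) => p.2 j) hpv
    simp only [hF2 (u, v) j, if_pos hj] at h0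
    simpa [tgt, hj] using h0

end CbpAux

set_option maxHeartbeats 2000000 in
theorem cbp_extended_support_characterization
    {H : Type*} [NormedAddCommGroup H] [InnerProductSpace ℝ H] [CompleteSpace H]
    {P : ℕ} (A B : EuclideanSpace ℝ (Fin P) →L[ℝ] H)
    (h : ℝ) (hh : 0 < h)
    (a₀ b₀ : EuclideanSpace ℝ (Fin P))
    (hcone₀ : ∀ i, 0 ≤ a₀ i ∧ |b₀ i| ≤ (h/2) * a₀ i)
    -- (a₀,b₀) is a solution of Q₀(A a₀ + B b₀)
    (hsol : ∀ a b : EuclideanSpace ℝ (Fin P),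
      (∀ i, 0 ≤ a i ∧ |b i| ≤ (h/2) * a i) →
      A a + B b = A a₀ + B b₀ → (∑ i, |a₀ i|) ≤ ∑ i, |a i|)
    (Iup Idn : Set (Fin P))
    (hIup : Iup = {i : Fin P | 0 < a₀ i + (2/h) * b₀ i})
    (hIdn : Idn = {i : Fin P | 0 < a₀ i - (2/h) * b₀ i})
    -- q₀ : the minimal-norm solution of the dual problem
    (q₀ : H)
    (hq₀_feas : ∀ k, (ContinuousLinearMap.adjoint A) q₀ k
      + (h/2) * |(ContinuousLinearMap.adjoint B) q₀ k| ≤ 1)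
    (hq₀_max : ∀ q : H,
      (∀ k, (ContinuousLinearMap.adjoint A) q k
        + (h/2) * |(ContinuousLinearMap.adjoint B) q k| ≤ 1) →
      ⟪A a₀ + B b₀, q⟫ ≤ ⟪A a₀ + B b₀, q₀⟫)
    (hq₀_min : ∀ q : H,
      (∀ k, (ContinuousLinearMap.adjoint A) q k
        + (h/2) * |(ContinuousLinearMap.adjoint B) q k| ≤ 1) →
      ⟪A a₀ + B b₀, q⟫ = ⟪A a₀ + B b₀, q₀⟫ → ‖q₀‖ ≤ ‖q‖)
    -- the candidate sets J↑, J↓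
    (Jup Jdn : Set (Fin P)) (hJup : Iup ⊆ Jup) (hJdn : Idn ⊆ Jdn)
    -- Ã has full rank
    (hfullrank : ∀ u v : EuclideanSpace ℝ (Fin P),
      (∀ i, i ∉ Jup → u i = 0) → (∀ i, i ∉ Jdn → v i = 0) →
      (A + (h/2) • B) u + (A - (h/2) • B) v = 0 → u = 0 ∧ v = 0)
    -- (u,v) = −(Ã^*Ã)⁻¹𝟙, encoded by support and normal equations
    (u v : EuclideanSpace ℝ (Fin P))
    (hu_supp : ∀ i, i ∉ Jup → u i = 0) (hv_supp : ∀ i, i ∉ Jdn → v i = 0)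
    (huv_def : (∀ j ∈ Jup, (ContinuousLinearMap.adjoint (A + (h/2) • B))
        ((A + (h/2) • B) u + (A - (h/2) • B) v) j = -1) ∧
      (∀ j ∈ Jdn, (ContinuousLinearMap.adjoint (A - (h/2) • B))
        ((A + (h/2) • B) u + (A - (h/2) • B) v) j = -1)) :
    -- the characterization, and the identification q₀ = q̃ in that case
    (((Jup = {j : Fin P | (ContinuousLinearMap.adjoint (A + (h/2) • B)) q₀ j = 1} ∧
       Jdn = {j : Fin P | (ContinuousLinearMap.adjoint (A - (h/2) • B)) q₀ j = 1}) ↔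
      ((∀ j ∈ Jup, j ∉ Iup → 0 ≤ u j) ∧ (∀ j ∈ Jdn, j ∉ Idn → 0 ≤ v j) ∧
       (∀ k, k ∉ Jup → (ContinuousLinearMap.adjoint (A + (h/2) • B))
          (-((A + (h/2) • B) u + (A - (h/2) • B) v)) k < 1) ∧
       (∀ k, k ∉ Jdn → (ContinuousLinearMap.adjoint (A - (h/2) • B))
          (-((A + (h/2) • B) u + (A - (h/2) • B) v)) k < 1))) ∧
     (((∀ j ∈ Jup, j ∉ Iup → 0 ≤ u j) ∧ (∀ j ∈ Jdn, j ∉ Idn → 0 ≤ v j) ∧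
       (∀ k, k ∉ Jup → (ContinuousLinearMap.adjoint (A + (h/2) • B))
          (-((A + (h/2) • B) u + (A - (h/2) • B) v)) k < 1) ∧
       (∀ k, k ∉ Jdn → (ContinuousLinearMap.adjoint (A - (h/2) • B))
          (-((A + (h/2) • B) u + (A - (h/2) • B) v)) k < 1)) →
      q₀ = -((A + (h/2) • B) u + (A - (h/2) • B) v))) := by
  classical
  set M := A + (h/2) • B with hM
  set N := A - (h/2) • B with hN
  set y₀ := A a₀ + B b₀ with hy₀def
  set qt := -(M u + N v) with hqtdef
  have h2h : (0:ℝ) < 2/h := by positivity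
  have hne : h ≠ 0 := ne_of_gt hh
  -- adjoint expansions
  have hadjM : ∀ (q : H) (k : Fin P), (ContinuousLinearMap.adjoint M) q k
      = (ContinuousLinearMap.adjoint A) q k + (h/2) * (ContinuousLinearMap.adjoint B) q k := by
    intro q k; rw [hM]; simp [map_add, map_smul]
  have hadjN : ∀ (q : H) (k : Fin P), (ContinuousLinearMap.adjoint N) q k
      = (ContinuousLinearMap.adjoint A) q k - (h/2) * (ContinuousLinearMap.adjoint B) q k := by
    intro q k; rw [hN]; simp [map_sub, map_smul]
  -- dual feasibility conversion
  have hfeas : ∀ q : H, (∀ k, (ContinuousLinearMap.adjoint M) q k ≤ 1) →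
      (∀ k, (ContinuousLinearMap.adjoint N) q k ≤ 1) →
      (∀ k, (ContinuousLinearMap.adjoint A) q k
        + (h/2) * |(ContinuousLinearMap.adjoint B) q k| ≤ 1) := by
    intro q h1 h2 k
    have e1 := hadjM q k
    have e2 := hadjN q k
    rcases abs_cases ((ContinuousLinearMap.adjoint B) q k) with ⟨he, _⟩ | ⟨he, _⟩
    · rw [he]; linarith [h1 k]
    · rw [he]; have := h2 k; rw [e2] at this; linarith
  have hm₀ : ∀ k, (ContinuousLinearMap.adjoint M) q₀ k ≤ 1 := by
    intro k
    have hf := hq₀_feas k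
    have habs : (h/2) * (ContinuousLinearMap.adjoint B) q₀ k
        ≤ (h/2) * |(ContinuousLinearMap.adjoint B) q₀ k| :=
      mul_le_mul_of_nonneg_left (le_abs_self _) (by positivity)
    rw [hadjM]; linarith
  have hn₀ : ∀ k, (ContinuousLinearMap.adjoint N) q₀ k ≤ 1 := by
    intro k
    have hf := hq₀_feas k
    have habs : (h/2) * (-|(ContinuousLinearMap.adjoint B) q₀ k|)
        ≤ (h/2) * (ContinuousLinearMap.adjoint B) q₀ k :=
      mul_le_mul_of_nonneg_left (neg_abs_le _) (by positivity)
    rw [hadjN]; linarith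
  -- α, β positivity and support
  have hα0 : ∀ i, 0 ≤ a₀ i + 2/h * b₀ i := by
    intro i
    obtain ⟨ha, hb⟩ := hcone₀ i
    rw [abs_le] at hb
    have key2 : 2/h * (h/2 * a₀ i) = a₀ i := by field_simp
    have h3 := mul_le_mul_of_nonneg_left hb.1 (le_of_lt h2h)
    rw [mul_neg, key2] at h3
    linarith
  have hβ0 : ∀ i, 0 ≤ a₀ i - 2/h * b₀ i := by
    intro i
    obtain ⟨ha, hb⟩ := hcone₀ i
    rw [abs_le] at hb
    have key2 : 2/h * (h/2 * a₀ i) = a₀ i := by field_simp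
    have h3 := mul_le_mul_of_nonneg_left hb.2 (le_of_lt h2h)
    rw [key2] at h3
    linarith
  have hαIup : ∀ i, i ∉ Iup → a₀ i + 2/h * b₀ i = 0 := by
    intro i hi
    rw [hIup] at hi
    simp only [Set.mem_setOf_eq, not_lt] at hi
    exact le_antisymm hi (hα0 i)
  have hβIdn : ∀ i, i ∉ Idn → a₀ i - 2/h * b₀ i = 0 := by
    intro i hi
    rw [hIdn] at hi
    simp only [Set.mem_setOf_eq, not_lt] at hi
    exact le_antisymm hi (hβ0 i)
  have hαpos : ∀ i ∈ Iup, 0 < a₀ i + 2/h * b₀ i := by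
    intro i hi; rw [hIup] at hi; exact hi
  have hβpos : ∀ i ∈ Idn, 0 < a₀ i - 2/h * b₀ i := by
    intro i hi; rw [hIdn] at hi; exact hi
  -- the decomposition of y₀
  have hMN2y : M (a₀ + (2/h) • b₀) + N (a₀ - (2/h) • b₀) = (2:ℝ) • y₀ := by
    rw [hM, hN, hy₀def]
    simp only [ContinuousLinearMap.add_apply, ContinuousLinearMap.sub_apply,
      ContinuousLinearMap.smul_apply, map_add, map_sub, map_smul]
    match_scalars <;> (field_simp; try ring)
  have hyq : ∀ q : H, 2 * ⟪y₀, q⟫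
      = (∑ i, (a₀ i + 2/h * b₀ i) * (ContinuousLinearMap.adjoint M) q i)
      + (∑ i, (a₀ i - 2/h * b₀ i) * (ContinuousLinearMap.adjoint N) q i) := by
    intro q
    have hc := congrArg (fun z : H => ⟪z, q⟫) hMN2y
    rw [inner_add_left, cbp_inner_clm_euclidean, cbp_inner_clm_euclidean,
      real_inner_smul_left] at hc
    have e1 : ∀ i, (a₀ + (2/h) • b₀) i = a₀ i + 2/h * b₀ i := fun i => rfl
    have e2 : ∀ i, (a₀ - (2/h) • b₀) i = a₀ i - 2/h * b₀ i := fun i => rfl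
    simp only [e1, e2] at hc
    linarith
  have hαβsum : (∑ i, (a₀ i + 2/h * b₀ i)) + (∑ i, (a₀ i - 2/h * b₀ i)) = 2 * ∑ i, a₀ i := by
    rw [← Finset.sum_add_distrib, Finset.mul_sum]
    exact Finset.sum_congr rfl (fun i _ => by ring)
  -- weak duality
  have hwd : ⟪y₀, q₀⟫ ≤ ∑ i, a₀ i := by
    have e := hyq q₀
    have s1 : (∑ i, (a₀ i + 2/h * b₀ i) * (ContinuousLinearMap.adjoint M) q₀ i)
        ≤ ∑ i, (a₀ i + 2/h * b₀ i) := by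
      apply Finset.sum_le_sum
      intro i _
      nlinarith [hα0 i, hm₀ i]
    have s2 : (∑ i, (a₀ i - 2/h * b₀ i) * (ContinuousLinearMap.adjoint N) q₀ i)
        ≤ ∑ i, (a₀ i - 2/h * b₀ i) := by
      apply Finset.sum_le_sum
      intro i _
      nlinarith [hβ0 i, hn₀ i]
    linarith
  -- values of the dual certificate on J
  have hqtM : ∀ j ∈ Jup, (ContinuousLinearMap.adjoint M) qt j = 1 := by
    intro j hj
    have hv1 := huv_def.1 j hj
    rw [hqtdef, map_neg]
    rw [show (-((ContinuousLinearMap.adjoint M) (M u + N v))) j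
      = -((ContinuousLinearMap.adjoint M) (M u + N v) j) from rfl, hv1]
    norm_num
  have hqtN : ∀ j ∈ Jdn, (ContinuousLinearMap.adjoint N) qt j = 1 := by
    intro j hj
    have hv1 := huv_def.2 j hj
    rw [hqtdef, map_neg]
    rw [show (-((ContinuousLinearMap.adjoint N) (M u + N v))) j
      = -((ContinuousLinearMap.adjoint N) (M u + N v) j) from rfl, hv1]
    norm_num
  -- expansion of inner products against qt
  have e1 : ∀ q : H, ⟪qt, q⟫
      = -((∑ i, u i * (ContinuousLinearMap.adjoint M) q i)
        + (∑ i, v i * (ContinuousLinearMap.adjoint N) q i)) := by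
    intro q
    rw [hqtdef, inner_neg_left, inner_add_left, cbp_inner_clm_euclidean, cbp_inner_clm_euclidean]
  -- the implication (i)∧(ii) → q₀ = qt
  have himp : ((∀ j ∈ Jup, j ∉ Iup → 0 ≤ u j) ∧ (∀ j ∈ Jdn, j ∉ Idn → 0 ≤ v j) ∧
       (∀ k, k ∉ Jup → (ContinuousLinearMap.adjoint M) qt k < 1) ∧
       (∀ k, k ∉ Jdn → (ContinuousLinearMap.adjoint N) qt k < 1)) → q₀ = qt := by
    rintro ⟨hu, hv, hsM, hsN⟩
    have hqtM1 : ∀ k, (ContinuousLinearMap.adjoint M) qt k ≤ 1 := by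
      intro k
      by_cases hk : k ∈ Jup
      · exact le_of_eq (hqtM k hk)
      · exact le_of_lt (hsM k hk)
    have hqtN1 : ∀ k, (ContinuousLinearMap.adjoint N) qt k ≤ 1 := by
      intro k
      by_cases hk : k ∈ Jdn
      · exact le_of_eq (hqtN k hk)
      · exact le_of_lt (hsN k hk)
    have hqt_feas := hfeas qt hqtM1 hqtN1
    have hyqt : ⟪y₀, qt⟫ = ∑ i, a₀ i := by
      have e := hyq qt
      have s1 : (∑ i, (a₀ i + 2/h * b₀ i) * (ContinuousLinearMap.adjoint M) qt i)
          = ∑ i, (a₀ i + 2/h * b₀ i) := by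
        apply Finset.sum_congr rfl
        intro i _
        by_cases hi : i ∈ Iup
        · rw [hqtM i (hJup hi), mul_one]
        · rw [hαIup i hi, zero_mul]
      have s2 : (∑ i, (a₀ i - 2/h * b₀ i) * (ContinuousLinearMap.adjoint N) qt i)
          = ∑ i, (a₀ i - 2/h * b₀ i) := by
        apply Finset.sum_congr rfl
        intro i _
        by_cases hi : i ∈ Idn
        · rw [hqtN i (hJdn hi), mul_one]
        · rw [hβIdn i hi, zero_mul]
      linarith
    have hobj : ⟪y₀, q₀⟫ = ∑ i, a₀ i :=
      le_antisymm hwd (by rw [← hyqt]; exact hq₀_max qt hqt_feas)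
    -- complementary slackness
    have hsum0 : ∑ i, ((a₀ i + 2/h * b₀ i) * (1 - (ContinuousLinearMap.adjoint M) q₀ i)
        + (a₀ i - 2/h * b₀ i) * (1 - (ContinuousLinearMap.adjoint N) q₀ i)) = 0 := by
      have expand : ∀ i, (a₀ i + 2/h * b₀ i) * (1 - (ContinuousLinearMap.adjoint M) q₀ i)
          + (a₀ i - 2/h * b₀ i) * (1 - (ContinuousLinearMap.adjoint N) q₀ i)
          = ((a₀ i + 2/h * b₀ i) + (a₀ i - 2/h * b₀ i))
            - ((a₀ i + 2/h * b₀ i) * (ContinuousLinearMap.adjoint M) q₀ i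
              + (a₀ i - 2/h * b₀ i) * (ContinuousLinearMap.adjoint N) q₀ i) := by
        intro i; ring
      rw [Finset.sum_congr rfl (fun i _ => expand i), Finset.sum_sub_distrib]
      have e2 : ∑ i, ((a₀ i + 2/h * b₀ i) * (ContinuousLinearMap.adjoint M) q₀ i
          + (a₀ i - 2/h * b₀ i) * (ContinuousLinearMap.adjoint N) q₀ i)
          = (∑ i, (a₀ i + 2/h * b₀ i) * (ContinuousLinearMap.adjoint M) q₀ i)
          + (∑ i, (a₀ i - 2/h * b₀ i) * (ContinuousLinearMap.adjoint N) q₀ i) :=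
        Finset.sum_add_distrib
      have e3 : ∑ i, ((a₀ i + 2/h * b₀ i) + (a₀ i - 2/h * b₀ i))
          = (∑ i, (a₀ i + 2/h * b₀ i)) + (∑ i, (a₀ i - 2/h * b₀ i)) :=
        Finset.sum_add_distrib
      rw [e2, e3]
      have e := hyq q₀
      linarith
    have hterm : ∀ i ∈ Finset.univ, ((a₀ i + 2/h * b₀ i) * (1 - (ContinuousLinearMap.adjoint M) q₀ i)
        + (a₀ i - 2/h * b₀ i) * (1 - (ContinuousLinearMap.adjoint N) q₀ i)) = 0 :=
      (Finset.sum_eq_zero_iff_of_nonneg (fun i _ => by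
        have t1 : 0 ≤ (a₀ i + 2/h * b₀ i) * (1 - (ContinuousLinearMap.adjoint M) q₀ i) :=
          mul_nonneg (hα0 i) (by linarith [hm₀ i])
        have t2 : 0 ≤ (a₀ i - 2/h * b₀ i) * (1 - (ContinuousLinearMap.adjoint N) q₀ i) :=
          mul_nonneg (hβ0 i) (by linarith [hn₀ i])
        linarith)).mp hsum0
    have hcsM : ∀ i ∈ Iup, (ContinuousLinearMap.adjoint M) q₀ i = 1 := by
      intro i hi
      have ht := hterm i (Finset.mem_univ i)
      have t1 : 0 ≤ (a₀ i + 2/h * b₀ i) * (1 - (ContinuousLinearMap.adjoint M) q₀ i) :=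
        mul_nonneg (hα0 i) (by linarith [hm₀ i])
      have t2 : 0 ≤ (a₀ i - 2/h * b₀ i) * (1 - (ContinuousLinearMap.adjoint N) q₀ i) :=
        mul_nonneg (hβ0 i) (by linarith [hn₀ i])
      have t0 : (a₀ i + 2/h * b₀ i) * (1 - (ContinuousLinearMap.adjoint M) q₀ i) = 0 := by
        linarith
      rcases mul_eq_zero.mp t0 with hc | hc
      · exact absurd hc (ne_of_gt (hαpos i hi))
      · linarith
    have hcsN : ∀ i ∈ Idn, (ContinuousLinearMap.adjoint N) q₀ i = 1 := by
      intro i hi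
      have ht := hterm i (Finset.mem_univ i)
      have t1 : 0 ≤ (a₀ i + 2/h * b₀ i) * (1 - (ContinuousLinearMap.adjoint M) q₀ i) :=
        mul_nonneg (hα0 i) (by linarith [hm₀ i])
      have t2 : 0 ≤ (a₀ i - 2/h * b₀ i) * (1 - (ContinuousLinearMap.adjoint N) q₀ i) :=
        mul_nonneg (hβ0 i) (by linarith [hn₀ i])
      have t0 : (a₀ i - 2/h * b₀ i) * (1 - (ContinuousLinearMap.adjoint N) q₀ i) = 0 := by
        linarith
      rcases mul_eq_zero.mp t0 with hc | hc
      · exact absurd hc (ne_of_gt (hβpos i hi))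
      · linarith
    -- ⟪qt, q₀⟫ ≥ ⟪qt, qt⟫
    have hinner : ⟪qt, qt⟫ ≤ ⟪qt, q₀⟫ := by
      rw [e1 qt, e1 q₀]
      have s1 : (∑ i, u i * (ContinuousLinearMap.adjoint M) q₀ i)
          ≤ ∑ i, u i * (ContinuousLinearMap.adjoint M) qt i := by
        apply Finset.sum_le_sum
        intro i _
        by_cases hiJ : i ∈ Jup
        · rw [hqtM i hiJ]
          by_cases hiI : i ∈ Iup
          · rw [hcsM i hiI]
          · nlinarith [hu i hiJ hiI, hm₀ i]
        · rw [hu_supp i hiJ, zero_mul, zero_mul]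
      have s2 : (∑ i, v i * (ContinuousLinearMap.adjoint N) q₀ i)
          ≤ ∑ i, v i * (ContinuousLinearMap.adjoint N) qt i := by
        apply Finset.sum_le_sum
        intro i _
        by_cases hiJ : i ∈ Jdn
        · rw [hqtN i hiJ]
          by_cases hiI : i ∈ Idn
          · rw [hcsN i hiI]
          · nlinarith [hv i hiJ hiI, hn₀ i]
        · rw [hv_supp i hiJ, zero_mul, zero_mul]
      linarith
    have hnorm : ‖q₀‖ ≤ ‖qt‖ := hq₀_min qt hqt_feas (hyqt.trans hobj.symm)
    have hsq : ‖q₀ - qt‖^2 ≤ 0 := by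
      rw [norm_sub_sq_real]
      have hq1 : ‖qt‖^2 ≤ ⟪q₀, qt⟫ := by
        rw [real_inner_comm]
        calc ‖qt‖^2 = ⟪qt, qt⟫ := (real_inner_self_eq_norm_sq qt).symm
        _ ≤ ⟪qt, q₀⟫ := hinner
      have hq2 : ‖q₀‖^2 ≤ ‖qt‖^2 := pow_le_pow_left₀ (norm_nonneg _) hnorm 2
      linarith
    have hz : ‖q₀ - qt‖ = 0 := by
      have := sq_nonneg ‖q₀ - qt‖
      have h0 : ‖q₀ - qt‖^2 = 0 := le_antisymm hsq (by positivity)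
      exact pow_eq_zero_iff (by norm_num) |>.mp h0
    have := norm_sub_eq_zero_iff.mp hz
    exact this
  -- forward direction
  have hfwd : (Jup = {j : Fin P | (ContinuousLinearMap.adjoint M) q₀ j = 1} ∧
       Jdn = {j : Fin P | (ContinuousLinearMap.adjoint N) q₀ j = 1}) →
      ((∀ j ∈ Jup, j ∉ Iup → 0 ≤ u j) ∧ (∀ j ∈ Jdn, j ∉ Idn → 0 ≤ v j) ∧
       (∀ k, k ∉ Jup → (ContinuousLinearMap.adjoint M) qt k < 1) ∧
       (∀ k, k ∉ Jdn → (ContinuousLinearMap.adjoint N) qt k < 1)) := by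
    rintro ⟨hJ1, hJ2⟩
    have hact1 : ∀ j ∈ Jup, (ContinuousLinearMap.adjoint M) q₀ j = 1 := by
      intro j hj; rw [hJ1] at hj; exact hj
    have hact2 : ∀ j ∈ Jdn, (ContinuousLinearMap.adjoint N) q₀ j = 1 := by
      intro j hj; rw [hJ2] at hj; exact hj
    have hstrict1 : ∀ k, k ∉ Jup → (ContinuousLinearMap.adjoint M) q₀ k < 1 := by
      intro k hk
      rw [hJ1] at hk
      simp only [Set.mem_setOf_eq] at hk
      exact lt_of_le_of_ne (hm₀ k) hk
    have hstrict2 : ∀ k, k ∉ Jdn → (ContinuousLinearMap.adjoint N) q₀ k < 1 := by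
      intro k hk
      rw [hJ2] at hk
      simp only [Set.mem_setOf_eq] at hk
      exact lt_of_le_of_ne (hn₀ k) hk
    -- the variational inequality for feasible directions
    have key : ∀ dd : H, (∀ k, k ∈ Jup → (ContinuousLinearMap.adjoint M) dd k ≤ 0) →
        (∀ k, k ∈ Jdn → (ContinuousLinearMap.adjoint N) dd k ≤ 0) →
        ⟪y₀, dd⟫ = 0 → 0 ≤ ⟪q₀, dd⟫ := by
      intro dd hddM hddN hyd
      by_cases hdd0 : dd = 0
      · simp [hdd0]
      have hDpos : 0 < ‖dd‖^2 := pow_pos (norm_pos_iff.mpr hdd0) 2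
      have hexpM : ∀ (t : ℝ) (k : Fin P), (ContinuousLinearMap.adjoint M) (q₀ + t • dd) k
          = (ContinuousLinearMap.adjoint M) q₀ k + t * (ContinuousLinearMap.adjoint M) dd k := by
        intro t k; simp [map_add, map_smul]
      have hexpN : ∀ (t : ℝ) (k : Fin P), (ContinuousLinearMap.adjoint N) (q₀ + t • dd) k
          = (ContinuousLinearMap.adjoint N) q₀ k + t * (ContinuousLinearMap.adjoint N) dd k := by
        intro t k; simp [map_add, map_smul]
      have hper : ∀ k : Fin P, ∃ ε : ℝ, 0 < ε ∧ ∀ t : ℝ, 0 ≤ t → t ≤ ε →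
          ((ContinuousLinearMap.adjoint M) (q₀ + t • dd) k ≤ 1 ∧
           (ContinuousLinearMap.adjoint N) (q₀ + t • dd) k ≤ 1) := by
        intro k
        obtain ⟨ε1, hε1, hb1⟩ := cbp_affine_feas ((ContinuousLinearMap.adjoint M) q₀ k)
          ((ContinuousLinearMap.adjoint M) dd k) (hm₀ k)
          (by by_cases hk : k ∈ Jup
              · exact Or.inr (hddM k hk)
              · exact Or.inl (hstrict1 k hk))
        obtain ⟨ε2, hε2, hb2⟩ := cbp_affine_feas ((ContinuousLinearMap.adjoint N) q₀ k)
          ((ContinuousLinearMap.adjoint N) dd k) (hn₀ k)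
          (by by_cases hk : k ∈ Jdn
              · exact Or.inr (hddN k hk)
              · exact Or.inl (hstrict2 k hk))
        refine ⟨min ε1 ε2, lt_min hε1 hε2, fun t ht htm => ?_⟩
        constructor
        · rw [hexpM]; exact hb1 t ht (le_trans htm (min_le_left _ _))
        · rw [hexpN]; exact hb2 t ht (le_trans htm (min_le_right _ _))
      choose ε hε using hper
      obtain ⟨t0, ht0, ht0le⟩ := cbp_exists_pos_le_forall ε (fun k => (hε k).1)
      have hni : ∀ t : ℝ, 0 < t → t ≤ t0 → 0 ≤ 2 * t * ⟪q₀, dd⟫ + t^2 * ‖dd‖^2 := by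
        intro t ht htle
        have hfe := hfeas (q₀ + t • dd)
          (fun k => ((hε k).2 t ht.le (le_trans htle (ht0le k))).1)
          (fun k => ((hε k).2 t ht.le (le_trans htle (ht0le k))).2)
        have hob : ⟪y₀, q₀ + t • dd⟫ = ⟪y₀, q₀⟫ := by
          rw [inner_add_right, real_inner_smul_right, hyd]; ring
        have hle := hq₀_min _ hfe hob
        have hsq := pow_le_pow_left₀ (norm_nonneg q₀) hle 2
        rw [norm_add_sq_real, real_inner_smul_right] at hsq
        have hns : ‖t • dd‖^2 = t^2 * ‖dd‖^2 := by simp [norm_smul, mul_pow, sq_abs]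
        rw [hns] at hsq
        linarith
      by_contra hneg
      push_neg at hneg
      set c := ⟪q₀, dd⟫ with hc
      set t1 := min t0 (-c / ‖dd‖^2) with ht1def
      have ht1 : 0 < t1 := lt_min ht0 (div_pos (neg_pos.mpr hneg) hDpos)
      have hni1 := hni t1 ht1 (min_le_left _ _)
      have htD : t1 * ‖dd‖^2 ≤ -c :=
        (le_div_iff₀ hDpos).mp (min_le_right _ _)
      nlinarith [mul_le_mul_of_nonneg_left htD ht1.le, mul_pos ht1 (neg_pos.mpr hneg)]
    -- step 1 : q₀ = qt
    have hq0qt : q₀ = qt := by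
      have hdM0 : ∀ k ∈ Jup, (ContinuousLinearMap.adjoint M) (qt - q₀) k = 0 := by
        intro k hk
        have := hqtM k hk
        have := hact1 k hk
        simp [map_sub]
        linarith
      have hdN0 : ∀ k ∈ Jdn, (ContinuousLinearMap.adjoint N) (qt - q₀) k = 0 := by
        intro k hk
        have := hqtN k hk
        have := hact2 k hk
        simp [map_sub]
        linarith
      have hyd : ⟪y₀, qt - q₀⟫ = 0 := by
        have e := hyq (qt - q₀)
        have s1 : (∑ i, (a₀ i + 2/h * b₀ i) * (ContinuousLinearMap.adjoint M) (qt - q₀) i) = 0 :=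
          Finset.sum_eq_zero (fun i _ => by
            by_cases hi : i ∈ Iup
            · rw [hdM0 i (hJup hi), mul_zero]
            · rw [hαIup i hi, zero_mul])
        have s2 : (∑ i, (a₀ i - 2/h * b₀ i) * (ContinuousLinearMap.adjoint N) (qt - q₀) i) = 0 :=
          Finset.sum_eq_zero (fun i _ => by
            by_cases hi : i ∈ Idn
            · rw [hdN0 i (hJdn hi), mul_zero]
            · rw [hβIdn i hi, zero_mul])
        linarith
      have h1 : 0 ≤ ⟪q₀, qt - q₀⟫ :=
        key (qt - q₀) (fun k hk => le_of_eq (hdM0 k hk)) (fun k hk => le_of_eq (hdN0 k hk)) hyd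
      have h2 : ⟪qt, qt - q₀⟫ = 0 := by
        rw [e1 (qt - q₀)]
        have s1 : (∑ i, u i * (ContinuousLinearMap.adjoint M) (qt - q₀) i) = 0 :=
          Finset.sum_eq_zero (fun i _ => by
            by_cases hi : i ∈ Jup
            · rw [hdM0 i hi, mul_zero]
            · rw [hu_supp i hi, zero_mul])
        have s2 : (∑ i, v i * (ContinuousLinearMap.adjoint N) (qt - q₀) i) = 0 :=
          Finset.sum_eq_zero (fun i _ => by
            by_cases hi : i ∈ Jdn
            · rw [hdN0 i hi, mul_zero]
            · rw [hv_supp i hi, zero_mul])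
        rw [s1, s2]; ring
      have h3 : ⟪q₀ - qt, qt - q₀⟫ = -‖qt - q₀‖^2 := by
        rw [show q₀ - qt = -(qt - q₀) from (neg_sub qt q₀).symm, inner_neg_left,
          real_inner_self_eq_norm_sq]
      have h4 : ⟪q₀ - qt, qt - q₀⟫ = ⟪q₀, qt - q₀⟫ - ⟪qt, qt - q₀⟫ := inner_sub_left _ _ _
      have h5 : 0 ≤ -‖qt - q₀‖^2 := by rw [← h3, h4, h2]; linarith
      have h6 : ‖qt - q₀‖ = 0 := by
        have := sq_nonneg ‖qt - q₀‖
        have h0 : ‖qt - q₀‖^2 = 0 := le_antisymm (by linarith) (by positivity)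
        exact pow_eq_zero_iff (by norm_num) |>.mp h0
      exact (norm_sub_eq_zero_iff.mp h6).symm
    refine ⟨?_, ?_, ?_, ?_⟩
    · -- u ≥ 0 on Jup \ Iup
      intro j₀ hj₀J hj₀I
      obtain ⟨w, hw1, hw2⟩ := cbp_exists_adjoint_preimage M N Jup Jdn hfullrank
        (fun j => if j = j₀ then (-1:ℝ) else 0) (fun _ => (0:ℝ))
      have hwM : ∀ k, k ∈ Jup → (ContinuousLinearMap.adjoint M) w k ≤ 0 := by
        intro k hk; rw [hw1 k hk]; split <;> norm_num
      have hwN : ∀ k, k ∈ Jdn → (ContinuousLinearMap.adjoint N) w k ≤ 0 := by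
        intro k hk; rw [hw2 k hk]
      have hyw : ⟪y₀, w⟫ = 0 := by
        have e := hyq w
        have s1 : (∑ i, (a₀ i + 2/h * b₀ i) * (ContinuousLinearMap.adjoint M) w i) = 0 :=
          Finset.sum_eq_zero (fun i _ => by
            by_cases hi : i ∈ Iup
            · rw [hw1 i (hJup hi), if_neg (fun (he : i = j₀) => hj₀I (he ▸ hi)), mul_zero]
            · rw [hαIup i hi, zero_mul])
        have s2 : (∑ i, (a₀ i - 2/h * b₀ i) * (ContinuousLinearMap.adjoint N) w i) = 0 :=
          Finset.sum_eq_zero (fun i _ => by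
            by_cases hi : i ∈ Idn
            · rw [hw2 i (hJdn hi), mul_zero]
            · rw [hβIdn i hi, zero_mul])
        linarith
      have h0w := key w hwM hwN hyw
      have hval : ⟪q₀, w⟫ = u j₀ := by
        rw [hq0qt, e1 w]
        have s1 : (∑ i, u i * (ContinuousLinearMap.adjoint M) w i) = -u j₀ := by
          rw [Finset.sum_eq_single j₀]
          · rw [hw1 j₀ hj₀J, if_pos rfl]; ring
          · intro i _ hnei
            by_cases hi : i ∈ Jup
            · rw [hw1 i hi, if_neg hnei, mul_zero]
            · rw [hu_supp i hi, zero_mul]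
          · intro habs; exact absurd (Finset.mem_univ j₀) habs
        have s2 : (∑ i, v i * (ContinuousLinearMap.adjoint N) w i) = 0 :=
          Finset.sum_eq_zero (fun i _ => by
            by_cases hi : i ∈ Jdn
            · rw [hw2 i hi, mul_zero]
            · rw [hv_supp i hi, zero_mul])
        rw [s1, s2]; ring
      rw [hval] at h0w
      exact h0w
    · -- v ≥ 0 on Jdn \ Idn
      intro j₀ hj₀J hj₀I
      obtain ⟨w, hw1, hw2⟩ := cbp_exists_adjoint_preimage M N Jup Jdn hfullrank
        (fun _ => (0:ℝ)) (fun j => if j = j₀ then (-1:ℝ) else 0)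
      have hwM : ∀ k, k ∈ Jup → (ContinuousLinearMap.adjoint M) w k ≤ 0 := by
        intro k hk; rw [hw1 k hk]
      have hwN : ∀ k, k ∈ Jdn → (ContinuousLinearMap.adjoint N) w k ≤ 0 := by
        intro k hk; rw [hw2 k hk]; split <;> norm_num
      have hyw : ⟪y₀, w⟫ = 0 := by
        have e := hyq w
        have s1 : (∑ i, (a₀ i + 2/h * b₀ i) * (ContinuousLinearMap.adjoint M) w i) = 0 :=
          Finset.sum_eq_zero (fun i _ => by
            by_cases hi : i ∈ Iup
            · rw [hw1 i (hJup hi), mul_zero]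
            · rw [hαIup i hi, zero_mul])
        have s2 : (∑ i, (a₀ i - 2/h * b₀ i) * (ContinuousLinearMap.adjoint N) w i) = 0 :=
          Finset.sum_eq_zero (fun i _ => by
            by_cases hi : i ∈ Idn
            · rw [hw2 i (hJdn hi), if_neg (fun (he : i = j₀) => hj₀I (he ▸ hi)), mul_zero]
            · rw [hβIdn i hi, zero_mul])
        linarith
      have h0w := key w hwM hwN hyw
      have hval : ⟪q₀, w⟫ = v j₀ := by
        rw [hq0qt, e1 w]
        have s1 : (∑ i, u i * (ContinuousLinearMap.adjoint M) w i) = 0 :=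
          Finset.sum_eq_zero (fun i _ => by
            by_cases hi : i ∈ Jup
            · rw [hw1 i hi, mul_zero]
            · rw [hu_supp i hi, zero_mul])
        have s2 : (∑ i, v i * (ContinuousLinearMap.adjoint N) w i) = -v j₀ := by
          rw [Finset.sum_eq_single j₀]
          · rw [hw2 j₀ hj₀J, if_pos rfl]; ring
          · intro i _ hnei
            by_cases hi : i ∈ Jdn
            · rw [hw2 i hi, if_neg hnei, mul_zero]
            · rw [hv_supp i hi, zero_mul]
          · intro habs; exact absurd (Finset.mem_univ j₀) habs
        rw [s1, s2]; ring
      rw [hval] at h0w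
      exact h0w
    · intro k hk
      rw [← hq0qt]
      exact hstrict1 k hk
    · intro k hk
      rw [← hq0qt]
      exact hstrict2 k hk
  refine ⟨⟨hfwd, ?_⟩, himp⟩
  intro hc
  have hq0qt := himp hc
  obtain ⟨hcu, hcv, hcsM', hcsN'⟩ := hc
  constructor
  · ext j
    simp only [Set.mem_setOf_eq]
    constructor
    · intro hj
      rw [hq0qt]
      exact hqtM j hj
    · intro hj1
      by_contra hj
      rw [hq0qt] at hj1
      exact absurd hj1 (ne_of_lt (hcsM' j hj))
  · ext j
    simp only [Set.mem_setOf_eq]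
    constructor
    · intro hj
      rw [hq0qt]
      exact hqtN j hj
    · intro hj1
      by_contra hj
      rw [hq0qt] at hj1
      exact absurd hj1 (ne_of_lt (hcsN' j hj))
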